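/- (Formula (2.20)) Let m ≥ 1 be an integer, ω ∈ ℝ with ω ≠ 0, and t ∈ [0,1]. Set G_m(x) := |x|^{2m−1}/(2(2m−1)!) and g_α := ∫_0^1 e^{2πiωx} x^α dx. Then ∫_0^1 e^{2πiωx} G_m(x − t) dx = −∑_{α=0}^{2m−1} t^{2m−1−α} (−1)^α g_α / (2 · α! · (2m−1−α)!) + e^{2πiωt}/(2πiω)^{2m} − ∑_{k=0}^{2m−1} t^{2m−1−k} / ((2m−1−k)! (2πiω)^{k+1}). -/

import Mathlib

open Finset

noncomputable section

/-- `2πi·x` as a complex number. -/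
def twoPiI (x : ℝ) : ℂ := 2 * Real.pi * Complex.I * x

/-- `e^{2πi x}`. -/
def cexp2 (x : ℝ) : ℂ := Complex.exp (twoPiI x)

open intervalIntegral in
lemma hasDerivAt_expc (c : ℂ) (x : ℝ) :
    HasDerivAt (fun y : ℝ => Complex.exp (c * y) / c) (Complex.exp (c * x) / c * c) x := by
  have h : HasDerivAt (fun z : ℂ => Complex.exp (c * z) / c) (Complex.exp (c * x) * c / c) (x : ℂ) := by
    simpa [mul_comm] using (((Complex.hasDerivAt_exp (c * x)).comp (x:ℂ)
      (((hasDerivAt_id (x : ℂ)).const_mul c))).div_const c)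
  simpa [mul_div_assoc, mul_comm, div_mul_eq_mul_div] using h.comp_ofReal

lemma aux_int (c : ℂ) (hc : c ≠ 0) (n : ℕ) (t : ℝ) :
    (∫ x in (0:ℝ)..t, Complex.exp (c * x) * ((t:ℂ) - x) ^ n)
      = (n.factorial : ℂ) * (Complex.exp (c * t) / c ^ (n + 1)
          - ∑ k ∈ Finset.range (n + 1), (t:ℂ) ^ (n - k) / ((n - k).factorial * c ^ (k + 1))) := by
  induction n with
  | zero => simp [integral_exp_mul_complex hc, sub_div]
  | succ n ih =>
    have hu : ∀ x ∈ Set.uIcc (0:ℝ) t, HasDerivAt (fun x : ℝ => ((t:ℂ) - x) ^ (n+1))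
        (-((n+1 : ℕ) * ((t:ℂ) - x) ^ n)) x := by
      intro x _
      have h : HasDerivAt (fun z : ℂ => ((t:ℂ) - z) ^ (n+1))
          (((n+1 : ℕ) * ((t:ℂ) - x) ^ n) * (-1)) (x : ℂ) := by
        have := (hasDerivAt_pow (n+1) ((t:ℂ) - x)).comp (x:ℂ) ((hasDerivAt_id ((x:ℝ) : ℂ)).const_sub (t:ℂ))
        simpa [Function.comp_def] using this
      simpa [mul_neg_one] using h.comp_ofReal
    have hv : ∀ x ∈ Set.uIcc (0:ℝ) t, HasDerivAt (fun y : ℝ => Complex.exp (c * y) / c)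
        (Complex.exp (c * x)) x := by
      intro x _
      simpa [div_mul_cancel₀ _ hc] using hasDerivAt_expc c x
    have hiu : IntervalIntegrable (fun x : ℝ => -((n+1 : ℕ) * ((t:ℂ) - x) ^ n)) MeasureTheory.volume 0 t := by
      apply Continuous.intervalIntegrable; fun_prop
    have hiv : IntervalIntegrable (fun x : ℝ => Complex.exp (c * x)) MeasureTheory.volume 0 t := by
      apply Continuous.intervalIntegrable; fun_prop
    have parts := intervalIntegral.integral_mul_deriv_eq_deriv_mul hu hv hiu hiv
    have e0 : (fun x : ℝ => (-((n+1 : ℕ) * ((t:ℂ) - x) ^ n)) * (Complex.exp (c * x) / c))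
        = fun x : ℝ => (-((n+1 : ℕ)) / c) * (Complex.exp (c * x) * ((t:ℂ) - x) ^ n) := by
      funext x; field_simp
    rw [e0, intervalIntegral.integral_const_mul, ih] at parts
    have e1 : (∫ x in (0:ℝ)..t, Complex.exp (c * x) * ((t:ℂ) - x) ^ (n+1))
        = ∫ x in (0:ℝ)..t, ((t:ℂ) - x) ^ (n+1) * Complex.exp (c * x) := by
      apply intervalIntegral.integral_congr; intro x _; exact mul_comm _ _
    rw [e1, parts]
    have hreidx : (∑ k ∈ Finset.range (n + 2), (t:ℂ) ^ (n + 1 - k) / ((n + 1 - k).factorial * c ^ (k + 1)))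
        = (∑ k ∈ Finset.range (n + 1), (t:ℂ) ^ (n - k) / ((n - k).factorial * c ^ (k + 2)))
          + (t:ℂ) ^ (n+1) / ((n+1).factorial * c) := by
      rw [Finset.sum_range_succ' _ (n+1)]
      simp [Nat.succ_sub_succ]
    have hS : (∑ k ∈ Finset.range (n + 1), (t:ℂ) ^ (n - k) / ((n - k).factorial * c ^ (k + 2)))
        = (∑ k ∈ Finset.range (n + 1), (t:ℂ) ^ (n - k) / ((n - k).factorial * c ^ (k + 1))) / c := by
      rw [Finset.sum_div]
      refine Finset.sum_congr rfl fun k _ => ?_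
      rw [pow_succ, div_div, mul_assoc]
    rw [hreidx, hS]
    have hfac : ((n+1).factorial : ℂ) = (n+1) * (n.factorial : ℂ) := by
      push_cast [Nat.factorial_succ]; ring
    have hfacne : ((n+1).factorial : ℂ) ≠ 0 := by exact_mod_cast (Nat.factorial_pos _).ne'
    have hfn : ((n).factorial : ℂ) ≠ 0 := by exact_mod_cast (Nat.factorial_pos _).ne'
    have hn1 : ((n:ℂ) + 1) ≠ 0 := Nat.cast_add_one_ne_zero n
    simp only [Complex.ofReal_zero, mul_zero, Complex.exp_zero, sub_zero]
    generalize (∑ k ∈ Finset.range (n+1), (t:ℂ) ^ (n - k) / (((n - k).factorial : ℂ) * c ^ (k + 1))) = S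
    generalize Complex.exp (c * (t:ℂ)) = E
    rw [show n + 1 + 1 = n + 2 from rfl, pow_succ c (n+1), pow_succ c n]
    have hC : c ^ n ≠ 0 := pow_ne_zero _ hc
    generalize hCd : c ^ n = C at hC ⊢
    generalize hFd : (((n+1).factorial : ℕ) : ℂ) = F at hfac hfacne ⊢
    field_simp
    rw [hfac]
    push_cast; ring

/-- **Formula (2.20)**: for `m ≥ 1`, real `ω ≠ 0` and `t ∈ [0,1]`, with
`G_m(x) = |x|^{2m−1}/(2(2m−1)!)` and `g_α = ∫₀¹ e^{2πiωx} x^α dx`,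
`∫₀¹ e^{2πiωx} G_m(x−t) dx = −∑_{α=0}^{2m−1} t^{2m−1−α}(−1)^α g_α/(2·α!(2m−1−α)!)
  + e^{2πiωt}/(2πiω)^{2m} − ∑_{k=0}^{2m−1} t^{2m−1−k}/((2m−1−k)!(2πiω)^{k+1})`. -/
theorem fourier_Gm_integral (m : ℕ) (hm : 1 ≤ m) (ω : ℝ) (hω : ω ≠ 0)
    (t : ℝ) (ht : t ∈ Set.Icc (0 : ℝ) 1) :
    ∫ x in (0 : ℝ)..1,
        cexp2 (ω * x) * ((|x - t| ^ (2 * m - 1) / (2 * (2 * m - 1).factorial) : ℝ) : ℂ)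
      = -(∑ α ∈ Finset.range (2 * m),
            (t : ℂ) ^ (2 * m - 1 - α) * (-1 : ℂ) ^ α *
              (∫ x in (0 : ℝ)..1, cexp2 (ω * x) * (x : ℂ) ^ α)
              / (2 * (α.factorial : ℂ) * ((2 * m - 1 - α).factorial : ℂ)))
        + cexp2 (ω * t) / (twoPiI ω) ^ (2 * m)
        - ∑ k ∈ Finset.range (2 * m),
            (t : ℂ) ^ (2 * m - 1 - k)
              / (((2 * m - 1 - k).factorial : ℂ) * (twoPiI ω) ^ (k + 1)) := by
  obtain ⟨ht0, ht1⟩ := ht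
  set c : ℂ := twoPiI ω with hcdef
  have hc : c ≠ 0 := by
    simp only [hcdef, twoPiI]
    simp [Real.pi_ne_zero, Complex.I_ne_zero, hω, Complex.ofReal_ne_zero]
  have hcex : ∀ x : ℝ, cexp2 (ω * x) = Complex.exp (c * x) := by
    intro x
    simp only [cexp2, twoPiI, hcdef]
    push_cast
    ring_nf
  set n : ℕ := 2 * m - 1 with hndef
  have h2m : 2 * m = n + 1 := by omega
  have hodd : Odd n := ⟨m - 1, by omega⟩
  have hfn : ((n).factorial : ℂ) ≠ 0 := by exact_mod_cast (Nat.factorial_pos _).ne'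
  -- continuity-based integrability helpers
  have hcont : ∀ (f : ℝ → ℂ), Continuous f → ∀ a b : ℝ,
      IntervalIntegrable f MeasureTheory.volume a b := fun f hf a b => hf.intervalIntegrable a b
  -- the absolute-value integrand
  set h : ℝ → ℂ := fun x => Complex.exp (c * x) * ((|x - t| : ℝ) : ℂ) ^ n with hhdef
  have hhcont : Continuous h := by fun_prop
  -- step A : rewrite LHS
  have stepA : (∫ x in (0:ℝ)..1,
        cexp2 (ω * x) * ((|x - t| ^ (2 * m - 1) / (2 * (2 * m - 1).factorial) : ℝ) : ℂ))
      = (1 / (2 * (n.factorial : ℂ))) * ∫ x in (0:ℝ)..1, h x := by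
    rw [← intervalIntegral.integral_const_mul]
    apply intervalIntegral.integral_congr
    intro x _
    simp only [hcex, hhdef, ← h2m]
    push_cast
    ring
  -- splitting
  set B : ℂ := ∫ x in (0:ℝ)..1, Complex.exp (c * x) * ((x:ℂ) - t) ^ n with hBdef
  set D : ℂ := ∫ x in (0:ℝ)..t, Complex.exp (c * x) * ((t:ℂ) - x) ^ n with hDdef
  have hsplit : (∫ x in (0:ℝ)..1, h x) = B + 2 * D := by
    have hadj : (∫ x in (0:ℝ)..1, h x)
        = (∫ x in (0:ℝ)..t, h x) + ∫ x in t..1, h x := by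
      rw [intervalIntegral.integral_add_adjacent_intervals (hcont h hhcont 0 t) (hcont h hhcont t 1)]
    have hD0 : (∫ x in (0:ℝ)..t, h x) = D := by
      apply intervalIntegral.integral_congr
      intro x hx
      rw [Set.uIcc_of_le ht0] at hx
      simp only [hhdef]
      rw [abs_of_nonpos (by linarith [hx.2] : x - t ≤ 0)]
      push_cast
      ring
    have hD1 : (∫ x in t..(1:ℝ), h x) = ∫ x in t..(1:ℝ), Complex.exp (c * x) * ((x:ℂ) - t) ^ n := by
      apply intervalIntegral.integral_congr
      intro x hx
      rw [Set.uIcc_of_le ht1] at hx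
      simp only [hhdef]
      rw [abs_of_nonneg (by linarith [hx.1] : (0:ℝ) ≤ x - t)]
      push_cast
      ring
    have hBadj : B = (∫ x in (0:ℝ)..t, Complex.exp (c * x) * ((x:ℂ) - t) ^ n)
        + ∫ x in t..(1:ℝ), Complex.exp (c * x) * ((x:ℂ) - t) ^ n := by
      rw [hBdef, intervalIntegral.integral_add_adjacent_intervals
        (hcont _ (by fun_prop) 0 t) (hcont _ (by fun_prop) t 1)]
    have hneg : (∫ x in (0:ℝ)..t, Complex.exp (c * x) * ((x:ℂ) - t) ^ n) = -D := by
      rw [hDdef, ← intervalIntegral.integral_neg]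
      apply intervalIntegral.integral_congr
      intro x _
      have h9 : ((x:ℂ) - t) ^ n = -(((t:ℂ) - x) ^ n) := by
        rw [← Odd.neg_pow hodd, neg_sub]
      simp only [h9]
      ring
    rw [hadj, hD0, hD1]
    rw [hneg] at hBadj
    have : (∫ x in t..(1:ℝ), Complex.exp (c * x) * ((x:ℂ) - t) ^ n) = B + D := by
      rw [hBadj]; ring
    rw [this]; ring
  -- binomial expansion of B
  have hB : B = ∑ α ∈ Finset.range (n + 1),
      ((-1:ℂ) ^ (α + n) * (t:ℂ) ^ (n - α) * (n.choose α : ℂ))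
        * ∫ x in (0:ℝ)..1, Complex.exp (c * x) * (x:ℂ) ^ α := by
    rw [hBdef]
    have : (fun x : ℝ => Complex.exp (c * x) * ((x:ℂ) - t) ^ n)
        = fun x : ℝ => ∑ α ∈ Finset.range (n + 1),
            ((-1:ℂ) ^ (α + n) * (t:ℂ) ^ (n - α) * (n.choose α : ℂ))
              * (Complex.exp (c * x) * (x:ℂ) ^ α) := by
      funext x
      rw [sub_pow, Finset.mul_sum]
      refine Finset.sum_congr rfl fun α _ => ?_
      ring
    rw [this, intervalIntegral.integral_finset_sum]
    · refine Finset.sum_congr rfl fun α _ => ?_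
      rw [intervalIntegral.integral_const_mul]
    · intro α _
      exact hcont _ (by fun_prop) 0 1
  -- value of D
  have hD : D = (n.factorial : ℂ) * (Complex.exp (c * t) / c ^ (n + 1)
      - ∑ k ∈ Finset.range (n + 1), (t:ℂ) ^ (n - k) / ((n - k).factorial * c ^ (k + 1))) :=
    aux_int c hc n t
  rw [stepA, hsplit, hB, hD]
  rw [h2m]
  -- rewrite g_α in the RHS
  have hgα : ∀ α : ℕ, (∫ x in (0:ℝ)..1, cexp2 (ω * x) * (x:ℂ) ^ α)
      = ∫ x in (0:ℝ)..1, Complex.exp (c * x) * (x:ℂ) ^ α := by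
    intro α
    apply intervalIntegral.integral_congr
    intro x _
    simp only [hcex]
  have hct : cexp2 (ω * t) = Complex.exp (c * t) := hcex t
  simp only [hgα, hct]
  rw [mul_add]
  have hterm : ∀ α ∈ Finset.range (n + 1),
      (1 / (2 * (n.factorial : ℂ))) * (((-1:ℂ) ^ (α + n) * (t:ℂ) ^ (n - α) * (n.choose α : ℂ))
          * ∫ x in (0:ℝ)..1, Complex.exp (c * x) * (x:ℂ) ^ α)
        = -((t:ℂ) ^ (n - α) * (-1:ℂ) ^ α * (∫ x in (0:ℝ)..1, Complex.exp (c * x) * (x:ℂ) ^ α)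
            / (2 * (α.factorial : ℂ) * ((n - α).factorial : ℂ))) := by
    intro α hα
    rw [Finset.mem_range, Nat.lt_succ_iff] at hα
    have hcf : ((n.choose α : ℕ) : ℂ) * (α.factorial : ℂ) * ((n - α).factorial : ℂ)
        = (n.factorial : ℂ) := by
      exact_mod_cast congrArg (Nat.cast : ℕ → ℂ)
        (Nat.choose_mul_factorial_mul_factorial hα)
    have hfα : ((α.factorial : ℕ) : ℂ) ≠ 0 := by exact_mod_cast (Nat.factorial_pos _).ne'
    have hfnα : (((n - α).factorial : ℕ) : ℂ) ≠ 0 := by exact_mod_cast (Nat.factorial_pos _).ne'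
    have hch : ((n.choose α : ℕ) : ℂ) ≠ 0 := by
      exact_mod_cast (Nat.choose_pos hα).ne'
    rw [pow_add, Odd.neg_one_pow hodd, ← hcf]
    field_simp
  have hsum1 : (1 / (2 * (n.factorial : ℂ))) * (∑ α ∈ Finset.range (n + 1),
      ((-1:ℂ) ^ (α + n) * (t:ℂ) ^ (n - α) * (n.choose α : ℂ))
        * ∫ x in (0:ℝ)..1, Complex.exp (c * x) * (x:ℂ) ^ α)
      = ∑ α ∈ Finset.range (n + 1),
          -((t:ℂ) ^ (n - α) * (-1:ℂ) ^ α * (∫ x in (0:ℝ)..1, Complex.exp (c * x) * (x:ℂ) ^ α)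
            / (2 * (α.factorial : ℂ) * ((n - α).factorial : ℂ))) := by
    rw [Finset.mul_sum]
    exact Finset.sum_congr rfl hterm
  rw [hsum1, Finset.sum_neg_distrib]
  have hDpart : (1 / (2 * (n.factorial : ℂ))) * (2 * ((n.factorial : ℂ) *
      (Complex.exp (c * t) / c ^ (n + 1)
        - ∑ k ∈ Finset.range (n + 1), (t:ℂ) ^ (n - k) / ((n - k).factorial * c ^ (k + 1)))))
      = Complex.exp (c * t) / c ^ (n + 1)
        - ∑ k ∈ Finset.range (n + 1), (t:ℂ) ^ (n - k) / ((n - k).factorial * c ^ (k + 1)) := by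
    field_simp
  rw [hDpart]
  ring
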